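/- The inversion in the 3-sphere, φ : ℝ⁴∖{0} → ℝ⁴∖{0}, φ(x) = x/|x|², is a proper biharmonic conformal map: (i) its componentwise Euclidean Laplacian satisfies Δφ(x) = −4·x/|x|⁴, which is nonzero for every x ≠ 0; (ii) Δ(Δφ)(x) = 0 for every x ≠ 0; and (iii) for every x ≠ 0 the Fréchet derivative of φ at x is a nonzero conformal linear map from ℝ⁴ to ℝ⁴. -/

import Mathlib

/-- The componentwise Euclidean Laplacian of a map defined on `EuclideanSpace ℝ (Fin m)`:
`Δ f (x) = ∑ᵢ ∂²f/∂xᵢ² (x)`. -/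
noncomputable def lapE {m : ℕ} {F : Type*} [NormedAddCommGroup F] [NormedSpace ℝ F]
    (f : EuclideanSpace ℝ (Fin m) → F) (x : EuclideanSpace ℝ (Fin m)) : F :=
  ∑ i : Fin m,
    fderiv ℝ (fun y => fderiv ℝ f y (EuclideanSpace.single i (1 : ℝ))) x
      (EuclideanSpace.single i (1 : ℝ))

open RealInnerProductSpace

noncomputable abbrev E4 := EuclideanSpace ℝ (Fin 4)

lemma hasF_pow_inv (k : ℕ) (x : E4) (hx : x ≠ 0) :
    HasFDerivAt (fun y : E4 => ((‖y‖ ^ 2) ^ k)⁻¹)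
      ((-2 * k * ((‖x‖ ^ 2) ^ (k + 1))⁻¹) • innerSL ℝ x) x := by
  have hr : (‖x‖ : ℝ) ^ 2 ≠ 0 := by
    simpa using norm_ne_zero_iff.2 hx
  have h1 : HasFDerivAt (fun y : E4 => ‖y‖ ^ 2) ((2 : ℕ) • innerSL ℝ x) x :=
    (hasStrictFDerivAt_norm_sq x).hasFDerivAt
  have hg := hasDerivAt_zpow (-(k : ℤ)) (‖x‖ ^ 2) (Or.inl hr)
  have hcomp := hg.comp_hasFDerivAt x h1
  have efun : (fun y : E4 => ((‖y‖ ^ 2) ^ k)⁻¹)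
      = fun y : E4 => (‖y‖ ^ 2 : ℝ) ^ (-(k : ℤ)) := by
    funext y; rw [zpow_neg, zpow_natCast]
  rw [efun]
  refine hcomp.congr_fderiv ?_
  ext w
  simp only [ContinuousLinearMap.coe_smul', Pi.smul_apply, innerSL_apply_apply, smul_eq_mul]
  have hz : (‖x‖ ^ 2 : ℝ) ^ ((-(k : ℤ)) - 1) = ((‖x‖ ^ 2) ^ (k + 1))⁻¹ := by
    rw [show (-(k : ℤ)) - 1 = -((k + 1 : ℕ) : ℤ) by push_cast; ring, zpow_neg, zpow_natCast]
  rw [hz]; push_cast; ring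

/-- Explicit derivative of the generalized inversion map `y ↦ (a * (‖y‖²)^k)⁻¹ • y`. -/
noncomputable def clmPhi (a : ℝ) (k : ℕ) (x : E4) : E4 →L[ℝ] E4 :=
  (a * ((‖x‖ ^ 2) ^ k)⁻¹) • ContinuousLinearMap.id ℝ E4 +
    ContinuousLinearMap.smulRight ((-2 * a * k * ((‖x‖ ^ 2) ^ (k + 1))⁻¹) • innerSL ℝ x) x

lemma hasF_phi (a : ℝ) (k : ℕ) (x : E4) (hx : x ≠ 0) :
    HasFDerivAt (fun y : E4 => (a * ((‖y‖ ^ 2) ^ k)⁻¹) • y) (clmPhi a k x) x := by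
  have hc := ((hasF_pow_inv k x hx).const_mul a).smul (hasFDerivAt_id x)
  have e : a • ((2 * (k : ℝ) * ((‖x‖ ^ 2) ^ (k + 1))⁻¹) • innerSL ℝ x)
      = (2 * a * (k : ℝ) * ((‖x‖ ^ 2) ^ (k + 1))⁻¹) • innerSL ℝ x := by
    rw [smul_smul]; congr 1; ring
  have hc' : HasFDerivAt (fun y : E4 => (a * ((‖y‖ ^ 2) ^ k)⁻¹) • y) _ x := hc
  simpa [clmPhi, e] using hc'

noncomputable def Gmid (a : ℝ) (k : ℕ) (v y : E4) : E4 :=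
  (a * ((‖y‖ ^ 2) ^ k)⁻¹) • v +
    (-2 * a * k * ((‖y‖ ^ 2) ^ (k + 1))⁻¹ * ⟪y, v⟫) • y

lemma clmPhi_apply (a : ℝ) (k : ℕ) (x v : E4) : clmPhi a k x v = Gmid a k v x := by
  simp [clmPhi, Gmid, ContinuousLinearMap.smul_apply, ContinuousLinearMap.add_apply,
    ContinuousLinearMap.smulRight_apply, innerSL_apply_apply]

lemma hinner (v x : E4) : HasFDerivAt (fun y : E4 => ⟪y, v⟫) (innerSL ℝ v) x := by
  have : (fun y : E4 => ⟪y, v⟫) = ⇑(innerSL ℝ v) := by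
    funext y; exact real_inner_comm _ _
  rw [this]; exact (innerSL ℝ v).hasFDerivAt

lemma fderiv_Gmid_apply (a : ℝ) (k : ℕ) (v x : E4) (hx : x ≠ 0) :
    fderiv ℝ (Gmid a k v) x v =
      (-4 * a * k * ((‖x‖ ^ 2) ^ (k + 1))⁻¹ * ⟪x, v⟫) • v +
      (4 * a * k * (k + 1) * ((‖x‖ ^ 2) ^ (k + 2))⁻¹ * ⟪x, v⟫ ^ 2
        + -2 * a * k * ((‖x‖ ^ 2) ^ (k + 1))⁻¹ * ⟪v, v⟫) • x := by
  have h1 := ((hasF_pow_inv k x hx).const_mul a).smul (hasFDerivAt_const v x)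
  have hs := ((hasF_pow_inv (k+1) x hx).const_mul (-2 * a * (k:ℝ))).mul (hinner v x)
  have h2 := hs.smul (hasFDerivAt_id x)
  have h := h1.add h2
  have hd := HasFDerivAt.fderiv (f := Gmid a k v) (x := x) h
  rw [hd]
  simp only [ContinuousLinearMap.add_apply, ContinuousLinearMap.smul_apply,
    ContinuousLinearMap.smulRight_apply, ContinuousLinearMap.coe_id', id_eq,
    ContinuousLinearMap.coe_smul', Pi.smul_apply, innerSL_apply_apply, smul_eq_mul,
    ContinuousLinearMap.zero_apply, smul_zero, zero_add, add_zero, Pi.mul_apply]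
  match_scalars <;> push_cast <;> ring

lemma inner_single (x : E4) (i : Fin 4) : ⟪x, EuclideanSpace.single i (1:ℝ)⟫ = x i := by
  simp [EuclideanSpace.inner_single_right]

lemma single_self_inner (i : Fin 4) :
    ⟪(EuclideanSpace.single i (1:ℝ) : E4), EuclideanSpace.single i (1:ℝ)⟫ = 1 := by
  simp [EuclideanSpace.inner_single_right]

lemma sum_coord_smul_single (x : E4) :
    ∑ i : Fin 4, x i • (EuclideanSpace.single i (1:ℝ) : E4) = x := by
  ext j
  rw [WithLp.ofLp_sum, Finset.sum_apply]
  simp [EuclideanSpace.single_apply]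

lemma sum_coord_sq (x : E4) : ∑ i : Fin 4, x i ^ 2 = ‖x‖ ^ 2 := by
  rw [← real_inner_self_eq_norm_sq, PiLp.inner_apply]
  simp [RCLike.inner_apply, pow_two]

lemma lapE_gen (a : ℝ) (k : ℕ) (x : E4) (hx : x ≠ 0) :
    lapE (fun y => (a * ((‖y‖ ^ 2) ^ k)⁻¹) • y) x
      = ((4 * k ^ 2 - 8 * k : ℝ) * a * ((‖x‖ ^ 2) ^ (k + 1))⁻¹) • x := by
  have hr : (‖x‖ : ℝ) ^ 2 ≠ 0 := by simpa using norm_ne_zero_iff.2 hx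
  unfold lapE
  have key : ∀ i : Fin 4,
      fderiv ℝ (fun y => fderiv ℝ (fun z : E4 => (a * ((‖z‖ ^ 2) ^ k)⁻¹) • z) y
          (EuclideanSpace.single i (1:ℝ))) x (EuclideanSpace.single i (1:ℝ))
        = (-4 * a * k * ((‖x‖ ^ 2) ^ (k + 1))⁻¹ * x i) • (EuclideanSpace.single i (1:ℝ) : E4) +
          (4 * a * k * (k + 1) * ((‖x‖ ^ 2) ^ (k + 2))⁻¹ * (x i) ^ 2
            + -2 * a * k * ((‖x‖ ^ 2) ^ (k + 1))⁻¹) • x := by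
    intro i
    have hev : (fun y => fderiv ℝ (fun z : E4 => (a * ((‖z‖ ^ 2) ^ k)⁻¹) • z) y
          (EuclideanSpace.single i (1:ℝ)))
        =ᶠ[nhds x] Gmid a k (EuclideanSpace.single i (1:ℝ)) := by
      refine Filter.eventuallyEq_of_mem
        ((isOpen_compl_singleton (x := (0 : E4))).mem_nhds hx) ?_
      intro y hy
      show fderiv ℝ (fun z : E4 => (a * ((‖z‖ ^ 2) ^ k)⁻¹) • z) y
          (EuclideanSpace.single i (1:ℝ)) = _
      rw [(hasF_phi a k y hy).fderiv, clmPhi_apply]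
    rw [hev.fderiv_eq, fderiv_Gmid_apply a k _ x hx, inner_single, single_self_inner,
      mul_one]
  rw [Finset.sum_congr rfl fun i _ => key i]
  rw [Finset.sum_add_distrib]
  have e1 : ∑ i : Fin 4, (-4 * a * k * ((‖x‖ ^ 2) ^ (k + 1))⁻¹ * x i) •
      (EuclideanSpace.single i (1:ℝ) : E4)
      = (-4 * a * k * ((‖x‖ ^ 2) ^ (k + 1))⁻¹) • x := by
    simp_rw [mul_smul, ← Finset.smul_sum, sum_coord_smul_single]
  have e2 : ∑ i : Fin 4, (4 * a * k * (k + 1) * ((‖x‖ ^ 2) ^ (k + 2))⁻¹ * (x i) ^ 2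
        + -2 * a * k * ((‖x‖ ^ 2) ^ (k + 1))⁻¹) • x
      = (4 * a * k * (k + 1) * ((‖x‖ ^ 2) ^ (k + 2))⁻¹ * ‖x‖ ^ 2
        + 4 * (-2 * a * k * ((‖x‖ ^ 2) ^ (k + 1))⁻¹)) • x := by
    rw [← Finset.sum_smul]
    congr 1
    rw [Finset.sum_add_distrib, ← Finset.mul_sum, sum_coord_sq]
    simp [Finset.sum_const]
  rw [e1, e2, ← add_smul]
  congr 1
  field_simp
  ring

lemma lapE_congr {f g : E4 → E4} {x : E4} (h : f =ᶠ[nhds x] g) : lapE f x = lapE g x := by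
  unfold lapE
  refine Finset.sum_congr rfl fun i _ => ?_
  have h2 : (fun y => fderiv ℝ f y (EuclideanSpace.single i (1:ℝ)))
      =ᶠ[nhds x] (fun y => fderiv ℝ g y (EuclideanSpace.single i (1:ℝ))) := by
    filter_upwards [h.eventually_nhds] with y hy
    rw [Filter.EventuallyEq.fderiv_eq hy]
  rw [h2.fderiv_eq]

/- STATEMENT 10: the inversion φ(x) = x/|x|² of ℝ⁴∖{0} satisfies
(i) Δφ(x) = −4x/|x|⁴ ≠ 0, (ii) Δ(Δφ) = 0, and (iii) its Fréchet derivative at every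
x ≠ 0 is a nonzero conformal linear map: it is a proper biharmonic conformal map. -/
theorem stmt_10 :
    let φ : EuclideanSpace ℝ (Fin 4) → EuclideanSpace ℝ (Fin 4) :=
      fun x => (‖x‖ ^ 2)⁻¹ • x
    (∀ x : EuclideanSpace ℝ (Fin 4), x ≠ 0 →
        lapE φ x = (-4 / ‖x‖ ^ 4) • x ∧ lapE φ x ≠ 0) ∧
    (∀ x : EuclideanSpace ℝ (Fin 4), x ≠ 0 → lapE (lapE φ) x = 0) ∧
    (∀ x : EuclideanSpace ℝ (Fin 4), x ≠ 0 →
        IsConformalMap (fderiv ℝ φ x) ∧ fderiv ℝ φ x ≠ 0) := by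
  intro φ
  have hφ : φ = fun y : E4 => ((1:ℝ) * ((‖y‖ ^ 2) ^ 1)⁻¹) • y := by
    funext y
    show (‖y‖ ^ 2)⁻¹ • y = _
    norm_num
  have hlap : ∀ x : E4, x ≠ 0 → lapE φ x = (-4 / ‖x‖ ^ 4) • x := by
    intro x hx
    have hr : (‖x‖ : ℝ) ≠ 0 := norm_ne_zero_iff.2 hx
    rw [hφ, lapE_gen 1 1 x hx]
    congr 1
    field_simp
    ring
  refine ⟨fun x hx => ⟨hlap x hx, ?_⟩, fun x hx => ?_, fun x hx => ?_⟩
  · rw [hlap x hx]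
    have hr : (‖x‖ : ℝ) ≠ 0 := norm_ne_zero_iff.2 hx
    exact smul_ne_zero (div_ne_zero (by norm_num) (by positivity)) hx
  · -- biharmonic
    have h2 : lapE φ =ᶠ[nhds x] (fun y : E4 => ((-4:ℝ) * ((‖y‖ ^ 2) ^ 2)⁻¹) • y) := by
      refine Filter.eventuallyEq_of_mem
        ((isOpen_compl_singleton (x := (0 : E4))).mem_nhds hx) ?_
      intro y hy
      show lapE φ y = _
      rw [hφ, lapE_gen 1 1 y hy]
      norm_num
    rw [lapE_congr h2, lapE_gen (-4) 2 x hx]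
    norm_num
  · rw [hφ]
    rw [(hasF_phi 1 1 x hx).fderiv]
    have hr : (‖x‖ : ℝ) ^ 2 ≠ 0 := by simpa using norm_ne_zero_iff.2 hx
    constructor
    · rw [isConformalMap_iff]
      refine ⟨((‖x‖ ^ 2) ^ 2)⁻¹, by positivity, fun u v => ?_⟩
      rw [clmPhi_apply, clmPhi_apply]
      simp only [Gmid, inner_add_left, inner_add_right, real_inner_smul_left,
        real_inner_smul_right, real_inner_self_eq_norm_sq]
      rw [real_inner_comm v x, real_inner_comm u x]
      field_simp
      ring
    · intro h0
      have hval : clmPhi 1 1 x x = 0 := by rw [h0]; rfl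
      rw [clmPhi_apply] at hval
      simp only [Gmid, real_inner_self_eq_norm_sq] at hval
      have : ((1:ℝ) * ((‖x‖ ^ 2) ^ 1)⁻¹ + -2 * 1 * (1:ℕ) * ((‖x‖ ^ 2) ^ 2)⁻¹ * ‖x‖ ^ 2) • x = 0 := by
        rw [add_smul]; exact hval
      have hc : ((1:ℝ) * ((‖x‖ ^ 2) ^ 1)⁻¹ + -2 * 1 * (1:ℕ) * ((‖x‖ ^ 2) ^ 2)⁻¹ * ‖x‖ ^ 2) ≠ 0 := by
        field_simp
        intro hq
        rw [div_eq_zero_iff] at hq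
        exact hr (hq.resolve_left (by norm_num))
      exact hx ((smul_eq_zero.1 this).resolve_left hc)
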